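/- Let G be a finite index set, and for each g ∈ G let n_g ∈ ℕ and s_g ∈ (0,1], with ∑_{g∈G} n_g · s_g = k for a real number k > 0. Then ∑_{g∈G} ⌈ n_g / ⌊1/s_g⌋ ⌉ ≤ 2k + |G|. In particular, if |G| ≤ ⌈1/ε⌉ + 1 for some ε ∈ (0,1], the total is at most 2k + ⌈1/ε⌉ + 1. -/

import Mathlib

lemma floor_ge_half {x : ℝ} (hx : 1 ≤ x) : x / 2 ≤ (⌊x⌋₊ : ℝ) := by
  rcases le_or_gt 2 x with h | h
  · have := Nat.sub_one_lt_floor x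
    linarith
  · have h1 : (1 : ℕ) ≤ ⌊x⌋₊ := Nat.one_le_floor_iff x |>.mpr hx
    have : (1 : ℝ) ≤ (⌊x⌋₊ : ℝ) := by exact_mod_cast h1
    linarith

lemma term_bound (m : ℕ) {t : ℝ} (ht0 : 0 < t) (ht1 : t ≤ 1) :
    (⌈(m : ℝ) / (⌊1 / t⌋₊ : ℝ)⌉₊ : ℝ) ≤ 2 * m * t + 1 := by
  have hinv : (1 : ℝ) ≤ 1 / t := by rw [le_div_iff₀ ht0]; linarith
  have hf : (1 / t) / 2 ≤ (⌊1 / t⌋₊ : ℝ) := floor_ge_half hinv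
  have hfpos : (0 : ℝ) < (⌊1 / t⌋₊ : ℝ) := by
    have : (1:ℝ)/t/2 > 0 := by positivity
    linarith
  have hnn : (0 : ℝ) ≤ (m : ℝ) / (⌊1 / t⌋₊ : ℝ) := by positivity
  have hceil : (⌈(m : ℝ) / (⌊1 / t⌋₊ : ℝ)⌉₊ : ℝ) < (m : ℝ) / (⌊1 / t⌋₊ : ℝ) + 1 :=
    Nat.ceil_lt_add_one hnn
  have hdiv : (m : ℝ) / (⌊1 / t⌋₊ : ℝ) ≤ 2 * m * t := by
    rw [div_le_iff₀ hfpos]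
    have h2 : 1 / (2 * t) ≤ (⌊1 / t⌋₊ : ℝ) := by
      have : (1:ℝ) / t / 2 = 1 / (2 * t) := by ring
      linarith [hf, this ▸ hf]
    calc (m : ℝ) = 2 * m * t * (1 / (2 * t)) := by field_simp
      _ ≤ 2 * m * t * (⌊1 / t⌋₊ : ℝ) := by
          apply mul_le_mul_of_nonneg_left h2; positivity
  linarith

/-- Bound on pending candidates: with `n g` candidates in group `g`, each at current
marginal probability `s g ∈ (0,1]`, and `∑ g, n g * s g = k`, the total number of
pending representatives `∑ g, ⌈ n g / ⌊1 / s g⌋ ⌉` is at most `2k + |G|`; in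
particular at most `2k + ⌈1/ε⌉ + 1` when `|G| ≤ ⌈1/ε⌉ + 1`. -/
theorem pending_candidates_bound (G : Type*) [Fintype G] (n : G → ℕ) (s : G → ℝ)
    (hs : ∀ g, 0 < s g ∧ s g ≤ 1) (k : ℝ) (hk : 0 < k)
    (hsum : ∑ g, (n g : ℝ) * s g = k) :
    (∑ g, (⌈(n g : ℝ) / (⌊1 / s g⌋₊ : ℝ)⌉₊ : ℝ)) ≤ 2 * k + Fintype.card G ∧
    (∀ ε : ℝ, 0 < ε → ε ≤ 1 → Fintype.card G ≤ ⌈1 / ε⌉₊ + 1 →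
      (∑ g, (⌈(n g : ℝ) / (⌊1 / s g⌋₊ : ℝ)⌉₊ : ℝ)) ≤ 2 * k + (⌈1 / ε⌉₊ : ℝ) + 1) := by
  have hmain : (∑ g, (⌈(n g : ℝ) / (⌊1 / s g⌋₊ : ℝ)⌉₊ : ℝ)) ≤ 2 * k + Fintype.card G := by
    calc (∑ g, (⌈(n g : ℝ) / (⌊1 / s g⌋₊ : ℝ)⌉₊ : ℝ))
        ≤ ∑ g, (2 * (n g : ℝ) * s g + 1) := by
          apply Finset.sum_le_sum
          intro g _
          exact term_bound (n g) (hs g).1 (hs g).2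
      _ = 2 * k + Fintype.card G := by
          rw [Finset.sum_add_distrib, Finset.sum_const, nsmul_eq_mul, mul_one,
            Finset.card_univ]
          have h2k : ∑ g, 2 * (n g : ℝ) * s g = 2 * k := by
            rw [← hsum, Finset.mul_sum]
            exact Finset.sum_congr rfl fun g _ => by ring
          linarith
  refine ⟨hmain, fun ε hε hε1 hcard => ?_⟩
  have : (Fintype.card G : ℝ) ≤ (⌈1 / ε⌉₊ : ℝ) + 1 := by exact_mod_cast hcard
  linarith
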